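/- Let c ≥ 1, x ∈ ℝ^c and ε > 0. Then there exist: distinct points p, q ∈ ball(x, ε); radii 0 < δ < r such that closedBall(p, r) and closedBall(q, r) are disjoint and both contained in ball(x, ε); a constant λ ∈ (0, 1); an integer m with 1 ≤ m ≤ 2·5^c + 1; homeomorphisms φ_1, …, φ_m of ℝ^c with sup_{y∈ℝ^c} ‖φ_i(y) − y‖ ≤ 2ε for every i; and subsets S₁, S₂ ⊆ {1, …, m}, such that: (i) for each i ∈ S₁, φ_i is λ-Lipschitz on closedBall(p, r) and maps closedBall(p, r) into ball(p, r), and closedBall(p, δ) ⊆ ⋃_{i∈S₁} φ_i(ball(p, δ)); (ii) for each i ∈ S₂, φ_i⁻¹ is λ-Lipschitz on closedBall(q, r) and maps closedBall(q, r) into ball(q, r), and closedBall(q, δ) ⊆ ⋃_{i∈S₂} φ_i⁻¹(ball(q, δ)); (iii) there exist y ∈ ball(p, δ) and a finite composition T of maps from {φ_1, …, φ_m} with T(y) ∈ ball(q, δ), and there exist z ∈ ball(q, δ) and a finite composition S of maps from {φ_1, …, φ_m} with S(z) ∈ ball(p, δ). (This provides, arbitrarily close to the identity and localized near any point x, a contracting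 blending region around p and an expanding blending region around q together with transitions of the generated semigroup from one to the other and vice-versa.) -/

import Mathlib

open Metric Set

/-- `wordMap φ [i_n, …, i_1] x = φ_{i_n} ∘ ⋯ ∘ φ_{i_1} (x)`: a finite composition of
maps from the family `φ`, applied to `x`. -/
def wordMap {S M : Type*} (φ : S → M → M) : List S → M → M
  | [], x => x
  | i :: l, x => φ i (wordMap φ l x)


open MeasureTheory
open scoped ENNReal

section Aux

lemma BRT.sep_card_le {c : ℕ} (hc : 1 ≤ c) (p : EuclideanSpace ℝ (Fin c)) {δ : ℝ} (hδ : 0 < δ)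
    (T : Finset (EuclideanSpace ℝ (Fin c))) (hT : ↑T ⊆ closedBall p δ)
    (hsep : ∀ a ∈ T, ∀ b ∈ T, a ≠ b → δ/2 < dist a b) : T.card ≤ 5 ^ c := by
  haveI : Nonempty (Fin c) := ⟨⟨0, hc⟩⟩
  haveI : Nontrivial (EuclideanSpace ℝ (Fin c)) := inferInstance
  have hdisj : (T : Set (EuclideanSpace ℝ (Fin c))).PairwiseDisjoint
      (fun t => ball t (δ/4)) := by
    intro a ha b hb hab
    apply ball_disjoint_ball
    have := hsep a ha b hb hab
    linarith
  have hsub : ∀ t ∈ T, ball t (δ/4) ⊆ ball p (5*δ/4) := by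
    intro t ht u hu
    have h1 : dist t p ≤ δ := hT ht
    have h2 : dist u t < δ/4 := hu
    have := dist_triangle u t p
    simp only [mem_ball]
    linarith
  have hmeas : ∑ t ∈ T, volume (ball t (δ/4)) ≤ volume (ball p (5*δ/4)) := by
    rw [← measure_biUnion_finset hdisj (fun t _ => measurableSet_ball)]
    exact measure_mono (iUnion₂_subset hsub)
  have hball : ∀ t : EuclideanSpace ℝ (Fin c), volume (ball t (δ/4))
      = ENNReal.ofReal ((δ/4) ^ c) * volume (ball (0 : EuclideanSpace ℝ (Fin c)) 1) := by
    intro t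
    rw [Measure.addHaar_ball volume t (by linarith), finrank_euclideanSpace_fin]
  have hb2 : volume (ball p (5*δ/4))
      = ENNReal.ofReal ((5:ℝ)^c) * (ENNReal.ofReal ((δ/4) ^ c)
        * volume (ball (0 : EuclideanSpace ℝ (Fin c)) 1)) := by
    rw [Measure.addHaar_ball volume p (by positivity :(0:ℝ) ≤ 5*δ/4), finrank_euclideanSpace_fin,
      ← mul_assoc, ← ENNReal.ofReal_mul (by positivity), ← mul_pow]
    ring_nf
  rw [Finset.sum_congr rfl (fun t _ => hball t), Finset.sum_const, nsmul_eq_mul, hb2] at hmeas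
  have hpos : ENNReal.ofReal ((δ/4) ^ c) * volume (ball (0:EuclideanSpace ℝ (Fin c)) 1) ≠ 0 := by
    apply mul_ne_zero
    · simp only [ne_eq, ENNReal.ofReal_eq_zero, not_le]
      positivity
    · exact (measure_ball_pos volume _ one_pos).ne'
  have hfin : ENNReal.ofReal ((δ/4) ^ c) * volume (ball (0:EuclideanSpace ℝ (Fin c)) 1) ≠ ⊤ :=
    ENNReal.mul_ne_top ENNReal.ofReal_ne_top measure_ball_lt_top.ne
  have hle := (ENNReal.mul_le_mul_iff_left hpos hfin).1 hmeas
  have h5 : ENNReal.ofReal ((5:ℝ)^c) = ((5^c : ℕ) : ℝ≥0∞) := by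
    rw [← ENNReal.ofReal_natCast]
    push_cast
    rfl
  rw [h5] at hle
  exact_mod_cast hle

lemma BRT.exists_net {c : ℕ} (hc : 1 ≤ c) (p : EuclideanSpace ℝ (Fin c)) {δ : ℝ} (hδ : 0 < δ) :
    ∃ T : Finset (EuclideanSpace ℝ (Fin c)), p ∈ T ∧ T.card ≤ 5 ^ c ∧
      ↑T ⊆ closedBall p δ ∧ ∀ y ∈ closedBall p δ, ∃ t ∈ T, dist y t ≤ δ/2 := by
  classical
  set P : Finset (EuclideanSpace ℝ (Fin c)) → Prop := fun T =>
    p ∈ T ∧ ↑T ⊆ closedBall p δ ∧ ∀ a ∈ T, ∀ b ∈ T, a ≠ b → δ/2 < dist a b with hP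
  set S : Set ℕ := {n | ∃ T, P T ∧ T.card = n} with hS
  have hSne : S.Nonempty := by
    refine ⟨1, {p}, ?_, Finset.card_singleton p⟩
    refine ⟨Finset.mem_singleton_self p, ?_, ?_⟩
    · simp [mem_closedBall, hδ.le]
    · intro a ha b hb hab
      simp only [Finset.mem_singleton] at ha hb
      exact absurd (ha.trans hb.symm) hab
  have hSbdd : BddAbove S := by
    refine ⟨5 ^ c, fun n hn => ?_⟩
    obtain ⟨T, hT, rfl⟩ := hn
    exact BRT.sep_card_le hc p hδ T hT.2.1 hT.2.2
  obtain ⟨T, hT, hcard⟩ := Nat.sSup_mem hSne hSbdd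
  refine ⟨T, hT.1, ?_, hT.2.1, ?_⟩
  · rw [hcard]
    refine csSup_le hSne fun n hn => ?_
    obtain ⟨T', hT', rfl⟩ := hn
    exact BRT.sep_card_le hc p hδ T' hT'.2.1 hT'.2.2
  · intro y hy
    by_contra hcon
    push_neg at hcon
    have hyT : y ∉ T := by
      intro h
      have := hcon y h
      rw [dist_self] at this
      linarith
    have hP' : P (insert y T) := by
      refine ⟨Finset.mem_insert_of_mem hT.1, ?_, ?_⟩
      · intro a ha
        simp only [Finset.coe_insert, Set.mem_insert_iff] at ha
        rcases ha with rfl | ha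
        · exact hy
        · exact hT.2.1 ha
      · intro a ha b hb hab
        simp only [Finset.mem_insert] at ha hb
        rcases ha with rfl | ha <;> rcases hb with rfl | hb
        · exact absurd rfl hab
        · exact hcon b hb
        · rw [dist_comm]; exact hcon a ha
        · exact hT.2.2 a ha b hb hab
    have hmem : T.card + 1 ∈ S :=
      ⟨insert y T, hP', by rw [Finset.card_insert_of_notMem hyT]⟩
    have := le_csSup hSbdd hmem
    omega

noncomputable def BRT.θf (ε s : ℝ) : ℝ := max 0 (min 1 ((2*ε - s)/(2*ε - ε/100)))

namespace BRT

variable {ε s s' : ℝ}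

lemma θf_nonneg : 0 ≤ θf ε s := le_max_left _ _

lemma θf_le_one : θf ε s ≤ 1 := max_le zero_le_one (min_le_left _ _)

lemma θf_eq_one (hε : 0 < ε) (hs : s ≤ ε/100) : θf ε s = 1 := by
  have hd : 0 < 2*ε - ε/100 := by linarith
  have : (1:ℝ) ≤ (2*ε - s)/(2*ε - ε/100) := by
    rw [le_div_iff₀ hd]; linarith
  unfold θf
  rw [min_eq_left] <;> [skip; linarith]
  rw [max_eq_right zero_le_one]

lemma θf_lip (hε : 0 < ε) : |θf ε s - θf ε s'| ≤ |s - s'| / (2*ε - ε/100) := by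
  have hd : 0 < 2*ε - ε/100 := by linarith
  unfold θf
  calc |max 0 (min 1 ((2*ε - s)/(2*ε - ε/100))) - max 0 (min 1 ((2*ε - s')/(2*ε - ε/100)))|
      ≤ |min 1 ((2*ε - s)/(2*ε - ε/100)) - min 1 ((2*ε - s')/(2*ε - ε/100))| := by
        rw [max_comm 0 _, max_comm 0 _]; exact abs_max_sub_max_le_abs _ _ _
    _ ≤ |(2*ε - s)/(2*ε - ε/100) - (2*ε - s')/(2*ε - ε/100)| := by
        rw [min_comm, min_comm 1 _]
        have := abs_min_sub_min_le_max ((2*ε - s)/(2*ε - ε/100)) 1 ((2*ε - s')/(2*ε - ε/100)) 1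
        simpa using this
    _ = |s - s'| / (2*ε - ε/100) := by
        rw [div_sub_div_same, abs_div, abs_of_pos hd]
        congr 1
        rw [abs_sub_comm]
        congr 1
        ring

lemma θf_pos_bound (hε : 0 < ε) (h : θf ε s ≠ 0) : s ≤ 2*ε := by
  by_contra hs
  push_neg at hs
  apply h
  have hd : 0 < 2*ε - ε/100 := by linarith
  have : (2*ε - s)/(2*ε - ε/100) < 0 := div_neg_of_neg_of_pos (by linarith) hd
  unfold θf
  rw [min_eq_right (by linarith), max_eq_left (by linarith)]

lemma θf_half (hε : 0 < ε) (hs : s ≤ ε) : 1/2 ≤ θf ε s := by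
  have hd : 0 < 2*ε - ε/100 := by linarith
  have h1 : (1:ℝ)/2 ≤ (2*ε - s)/(2*ε - ε/100) := by
    rw [le_div_iff₀ hd]; linarith
  calc (1:ℝ)/2 ≤ min 1 ((2*ε - s)/(2*ε - ε/100)) := le_min (by norm_num) h1
    _ ≤ θf ε s := le_max_right _ _

end BRT

variable {E : Type*} [NormedAddCommGroup E] [NormedSpace ℝ E]

noncomputable def BRT.gmap (ε : ℝ) (a t y : E) : E :=
  BRT.θf ε ‖y - a‖ • ((t - a) - (4:ℝ)⁻¹ • (y - a))

noncomputable def BRT.fmap (ε : ℝ) (a t y : E) : E := y + BRT.gmap ε a t y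

namespace BRT

variable {ε : ℝ} {a t y z : E}

lemma wnorm_le (hε : 0 < ε) (ht : ‖t - a‖ ≤ ε/500) (hy : ‖y - a‖ ≤ 2*ε) :
    ‖(t - a) - (4:ℝ)⁻¹ • (y - a)‖ ≤ ε/500 + ε/2 := by
  calc ‖(t - a) - (4:ℝ)⁻¹ • (y - a)‖ ≤ ‖t - a‖ + ‖(4:ℝ)⁻¹ • (y - a)‖ := norm_sub_le _ _
    _ ≤ ε/500 + ε/2 := by
        rw [norm_smul]
        simp only [norm_inv, Real.norm_ofNat]
        have : ‖y - a‖ / 4 ≤ ε/2 := by linarith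
        rw [inv_mul_eq_div]
        linarith

lemma gmap_lip (hε : 0 < ε) (ht : ‖t - a‖ ≤ ε/500) :
    ‖gmap ε a t y - gmap ε a t z‖ ≤ (9/10) * ‖y - z‖ := by
  set θy := θf ε ‖y - a‖ with hθy
  set θz := θf ε ‖z - a‖ with hθz
  have hd : (0:ℝ) < 2*ε - ε/100 := by linarith
  have hnn : (0:ℝ) ≤ ‖y - z‖ := norm_nonneg _
  have hθd : |θy - θz| ≤ ‖y - z‖ / (2*ε - ε/100) := by
    refine (θf_lip hε).trans ?_
    gcongr
    calc |‖y - a‖ - ‖z - a‖| ≤ ‖(y - a) - (z - a)‖ := abs_norm_sub_norm_le _ _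
      _ = ‖y - z‖ := by rw [sub_sub_sub_cancel_right]
  have key : ∀ u : E, θf ε ‖u - a‖ ≠ 0 → ‖(t - a) - (4:ℝ)⁻¹ • (u - a)‖ ≤ ε/500 + ε/2 :=
    fun u hu => wnorm_le hε ht (θf_pos_bound hε hu)
  have hM : (ε/500 + ε/2) / (2*ε - ε/100) ≤ 13/20 := by
    rw [div_le_iff₀ hd]; linarith
  rcases eq_or_ne θy 0 with h0 | h0
  · rcases eq_or_ne θz 0 with h1 | h1
    · simp only [gmap, ← hθy, ← hθz, h0, h1, zero_smul, sub_zero, norm_zero]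
      positivity
    · have hw := key z h1
      have heq : ‖gmap ε a t y - gmap ε a t z‖ = θz * ‖(t - a) - (4:ℝ)⁻¹ • (z - a)‖ := by
        simp only [gmap, ← hθy, ← hθz, h0, zero_smul, zero_sub, norm_neg, norm_smul,
          Real.norm_eq_abs, abs_of_nonneg (θf_nonneg (ε := ε) (s := ‖z - a‖))]
        rw [abs_of_nonneg (show (0:ℝ) ≤ θz from θf_nonneg)]
      rw [heq]
      have hθzb : θz ≤ ‖y - z‖ / (2*ε - ε/100) := by
        have := hθd; rw [h0] at this
        simpa [abs_of_nonneg (show (0:ℝ) ≤ θz from θf_nonneg)] using this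
      calc θz * ‖(t - a) - (4:ℝ)⁻¹ • (z - a)‖
          ≤ (‖y - z‖ / (2*ε - ε/100)) * (ε/500 + ε/2) := by
            apply mul_le_mul hθzb hw (norm_nonneg _) (by positivity)
        _ = ((ε/500 + ε/2) / (2*ε - ε/100)) * ‖y - z‖ := by ring
        _ ≤ (9/10) * ‖y - z‖ := by nlinarith
  · have hw := key y h0
    have hdec : gmap ε a t y - gmap ε a t z
        = (θy - θz) • ((t - a) - (4:ℝ)⁻¹ • (y - a))
          + θz • ((4:ℝ)⁻¹ • (z - a) - (4:ℝ)⁻¹ • (y - a)) := by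
      simp only [gmap, ← hθy, ← hθz, sub_smul, smul_sub]
      abel
    rw [hdec]
    have h1 : ‖(θy - θz) • ((t - a) - (4:ℝ)⁻¹ • (y - a))‖
        ≤ (‖y - z‖ / (2*ε - ε/100)) * (ε/500 + ε/2) := by
      rw [norm_smul, Real.norm_eq_abs]
      exact mul_le_mul hθd hw (norm_nonneg _) (by positivity)
    have h2 : ‖θz • ((4:ℝ)⁻¹ • (z - a) - (4:ℝ)⁻¹ • (y - a))‖ ≤ (1/4) * ‖y - z‖ := by
      rw [norm_smul, Real.norm_eq_abs, abs_of_nonneg (θf_nonneg (ε := ε) (s := ‖z - a‖))]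
      have heq2 : (4:ℝ)⁻¹ • (z - a) - (4:ℝ)⁻¹ • (y - a) = (4:ℝ)⁻¹ • (z - y) := by
        rw [← smul_sub]; congr 1; abel
      rw [heq2, norm_smul]
      simp only [norm_inv, Real.norm_ofNat]
      have hb : ‖z - y‖ = ‖y - z‖ := norm_sub_rev _ _
      have := θf_le_one (ε := ε) (s := ‖z - a‖)
      rw [hb, inv_mul_eq_div]
      nlinarith [θf_nonneg (ε := ε) (s := ‖z - a‖), norm_nonneg (y - z)]
    calc ‖_ + _‖ ≤ _ + _ := norm_add_le _ _
      _ ≤ (‖y - z‖ / (2*ε - ε/100)) * (ε/500 + ε/2) + (1/4) * ‖y - z‖ := add_le_add h1 h2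
      _ = ((ε/500 + ε/2) / (2*ε - ε/100)) * ‖y - z‖ + (1/4) * ‖y - z‖ := by ring
      _ ≤ (13/20) * ‖y - z‖ + (1/4) * ‖y - z‖ := by nlinarith
      _ ≤ (9/10) * ‖y - z‖ := by nlinarith

lemma gmap_norm_le (hε : 0 < ε) (ht : ‖t - a‖ ≤ ε/500) : ‖gmap ε a t y‖ ≤ 2*ε := by
  rcases eq_or_ne (θf ε ‖y - a‖) 0 with h0 | h0
  · simp [gmap, h0]; positivity
  · have hw := wnorm_le hε ht (θf_pos_bound hε h0)
    rw [gmap, norm_smul, Real.norm_eq_abs, abs_of_nonneg θf_nonneg]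
    have := θf_le_one (ε := ε) (s := ‖y - a‖)
    nlinarith [θf_nonneg (ε := ε) (s := ‖y - a‖), norm_nonneg ((t - a) - (4:ℝ)⁻¹ • (y - a))]

lemma fmap_eq (hε : 0 < ε) (hy : ‖y - a‖ ≤ ε/100) :
    fmap ε a t y = t + (3/4 : ℝ) • (y - a) := by
  rw [fmap, gmap, θf_eq_one hε hy, one_smul]
  rw [show (3/4 : ℝ) = 1 - (4:ℝ)⁻¹ by norm_num, sub_smul, one_smul]
  abel

lemma fmap_shrink (hε : 0 < ε) (hy : ‖y - a‖ ≤ ε) :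
    ‖fmap ε a a y - a‖ ≤ (7/8) * ‖y - a‖ := by
  have hh : fmap ε a a y - a = (1 - θf ε ‖y - a‖ * (4:ℝ)⁻¹) • (y - a) := by
    rw [fmap, gmap, sub_self, zero_sub, smul_neg, smul_smul, sub_smul, one_smul]
    abel
  rw [hh, norm_smul, Real.norm_eq_abs]
  have h1 := θf_half hε hy
  have h2 := θf_le_one (ε := ε) (s := ‖y - a‖)
  have : |1 - θf ε ‖y - a‖ * (4:ℝ)⁻¹| ≤ 7/8 := by
    rw [abs_le]; constructor <;> nlinarith
  nlinarith [norm_nonneg (y - a)]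

lemma exists_homeo_of_lip [CompleteSpace E] [Nontrivial E] (f : E → E)
    (hlip : ∀ y z : E, ‖(f y - y) - (f z - z)‖ ≤ (9/10) * ‖y - z‖) :
    ∃ φ : E ≃ₜ E, ∀ y, φ y = f y := by
  have hA : ApproximatesLinearOn f
      ((ContinuousLinearEquiv.refl ℝ E : E ≃L[ℝ] E) : E →L[ℝ] E) univ (9/10 : NNReal) := by
    intro y _ z _
    simp only [ContinuousLinearEquiv.coe_coe, ContinuousLinearEquiv.coe_refl', id_eq]
    have h : f y - f z - (y - z) = (f y - y) - (f z - z) := by abel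
    rw [h]
    refine (hlip y z).trans_eq ?_
    norm_num
  have hc : Subsingleton E ∨ (9/10 : NNReal) <
      ‖(((ContinuousLinearEquiv.refl ℝ E).symm : E →L[ℝ] E))‖₊⁻¹ := by
    right
    have h0 : (((ContinuousLinearEquiv.refl ℝ E).symm : E →L[ℝ] E))
        = ContinuousLinearMap.id ℝ E := rfl
    rw [h0, ContinuousLinearMap.nnnorm_id, inv_one]
    exact NNReal.coe_lt_coe.mp (by norm_num)
  exact ⟨hA.toHomeomorph f hc, fun y => rfl⟩

end BRT

end Aux

@[simp] lemma wordMap_nil {S M : Type*} (φ : S → M → M) (x : M) : wordMap φ [] x = x := rfl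

@[simp] lemma wordMap_cons {S M : Type*} (φ : S → M → M) (i : S) (l : List S) (x : M) :
    wordMap φ (i :: l) x = φ i (wordMap φ l x) := rfl

set_option maxHeartbeats 1000000 in

/-- **Blending regions with transition near any point, close to the identity.**
Near any `x ∈ ℝ^c` there are distinct points `p, q`, radii `0 < δ < r` with disjoint
closed `r`-balls inside `ball x ε`, a contraction rate `λ ∈ (0,1)`, and at most
`2·5^c + 1` homeomorphisms `φ_i` of `ℝ^c`, uniformly `2ε`-close to the identity, such
that: a subfamily `S₁` forms a contracting blending region around `p` (each `φ_i`,
`i ∈ S₁`, is a `λ`-contraction of `closedBall p r` into `ball p r` and the images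
`φ_i(ball p δ)` cover `closedBall p δ`); a subfamily `S₂` forms an expanding blending
region around `q` (same with `φ_i⁻¹` around `q`); and the generated semigroup has
transitions from `ball p δ` to `ball q δ` and vice-versa. -/
theorem blending_regions_with_transition_near_identity
    (c : ℕ) (hc : 1 ≤ c) (x : EuclideanSpace ℝ (Fin c)) (ε : ℝ) (hε : 0 < ε) :
    ∃ p q : EuclideanSpace ℝ (Fin c), p ≠ q ∧ p ∈ ball x ε ∧ q ∈ ball x ε ∧
    ∃ δ r : ℝ, 0 < δ ∧ δ < r ∧
      Disjoint (closedBall p r) (closedBall q r) ∧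
      closedBall p r ⊆ ball x ε ∧ closedBall q r ⊆ ball x ε ∧
    ∃ L : ℝ, 0 < L ∧ L < 1 ∧
    ∃ m : ℕ, 1 ≤ m ∧ m ≤ 2 * 5 ^ c + 1 ∧
    ∃ (φ : Fin m → (EuclideanSpace ℝ (Fin c) ≃ₜ EuclideanSpace ℝ (Fin c)))
      (S₁ S₂ : Set (Fin m)),
      (∀ i, ∀ y, ‖φ i y - y‖ ≤ 2 * ε) ∧
      (∀ i ∈ S₁,
        (∀ a ∈ closedBall p r, ∀ b ∈ closedBall p r,
          ‖φ i a - φ i b‖ ≤ L * ‖a - b‖) ∧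
        MapsTo (φ i) (closedBall p r) (ball p r)) ∧
      closedBall p δ ⊆ ⋃ i ∈ S₁, φ i '' ball p δ ∧
      (∀ i ∈ S₂,
        (∀ a ∈ closedBall q r, ∀ b ∈ closedBall q r,
          ‖(φ i).symm a - (φ i).symm b‖ ≤ L * ‖a - b‖) ∧
        MapsTo ((φ i).symm) (closedBall q r) (ball q r)) ∧
      closedBall q δ ⊆ ⋃ i ∈ S₂, (φ i).symm '' ball q δ ∧
      (∃ y ∈ ball p δ, ∃ l : List (Fin m), l ≠ [] ∧
        wordMap (fun i => ⇑(φ i)) l y ∈ ball q δ) ∧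
      (∃ z ∈ ball q δ, ∃ l : List (Fin m), l ≠ [] ∧
        wordMap (fun i => ⇑(φ i)) l z ∈ ball p δ) := by
  classical
  haveI hnefin : Nonempty (Fin c) := ⟨⟨0, hc⟩⟩
  haveI : Nontrivial (EuclideanSpace ℝ (Fin c)) := inferInstance
  set u : EuclideanSpace ℝ (Fin c) := EuclideanSpace.single ⟨0, hc⟩ (ε/2) with hu
  have hun : ‖u‖ = ε/2 := by
    rw [hu, EuclideanSpace.norm_single]
    exact abs_of_pos (by linarith)
  set p := x - u with hp
  set q := x + u with hq
  have hqp : q - p = (2:ℝ) • u := by rw [hp, hq, two_smul]; abel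
  have hqpn : ‖q - p‖ = ε := by
    rw [hqp, norm_smul, Real.norm_ofNat, hun]; ring
  have hdistpq : dist p q = ε := by
    rw [dist_eq_norm, norm_sub_rev, hqpn]
  have hpq : p ≠ q := by
    intro h
    rw [h, dist_self] at hdistpq
    linarith
  have hpx : p ∈ ball x ε := by
    rw [mem_ball, dist_eq_norm, hp, sub_sub_cancel_left, norm_neg, hun]
    linarith
  have hqx : q ∈ ball x ε := by
    rw [mem_ball, dist_eq_norm, hq, add_sub_cancel_left, hun]
    linarith
  have hδpos : (0:ℝ) < ε/500 := by linarith
  obtain ⟨Tp, hpTp, hTpcard, hTpsub, hTpnet⟩ := BRT.exists_net hc p hδpos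
  obtain ⟨Tq, hqTq, hTqcard, hTqsub, hTqnet⟩ := BRT.exists_net hc q hδpos
  set lp := Tp.toList with hlp
  set lq := Tq.toList with hlq
  have hlpc : lp.length = Tp.card := Finset.length_toList _
  have hlqc : lq.length = Tq.card := Finset.length_toList _
  set m := lp.length + lq.length + 1 with hm
  have hTp' : ∀ t ∈ Tp, ‖t - p‖ ≤ ε/500 := by
    intro t ht
    have := hTpsub (Finset.mem_coe.mpr ht)
    rwa [mem_closedBall, dist_eq_norm] at this
  have hTq' : ∀ t ∈ Tq, ‖t - q‖ ≤ ε/500 := by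
    intro t ht
    have := hTqsub (Finset.mem_coe.mpr ht)
    rwa [mem_closedBall, dist_eq_norm] at this
  have hkey : ∀ a t : EuclideanSpace ℝ (Fin c),
      ∃ φ : EuclideanSpace ℝ (Fin c) ≃ₜ EuclideanSpace ℝ (Fin c),
        ‖t - a‖ ≤ ε/500 → ∀ y, φ y = BRT.fmap ε a t y := by
    intro a t
    by_cases h : ‖t - a‖ ≤ ε/500
    · have hfg : ∀ w : EuclideanSpace ℝ (Fin c),
          BRT.fmap ε a t w - w = BRT.gmap ε a t w := by
        intro w; rw [BRT.fmap]; abel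
      obtain ⟨φ, hφ⟩ := BRT.exists_homeo_of_lip (BRT.fmap ε a t) (fun y z => by
        rw [hfg, hfg]; exact BRT.gmap_lip hε h)
      exact ⟨φ, fun _ => hφ⟩
    · exact ⟨Homeomorph.refl _, fun hh => absurd hh h⟩
  choose Φ hΦ using hkey
  set τ : EuclideanSpace ℝ (Fin c) ≃ₜ EuclideanSpace ℝ (Fin c) :=
    Homeomorph.addLeft (q - p) with hτ
  have hτap : ∀ y, τ y = (q - p) + y := fun y => rfl
  set φfun : Fin m → (EuclideanSpace ℝ (Fin c) ≃ₜ EuclideanSpace ℝ (Fin c)) := fun i =>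
    if h : (i:ℕ) < lp.length then Φ p (lp[(i:ℕ)]'h)
    else if h2 : (i:ℕ) - lp.length < lq.length then (Φ q (lq[(i:ℕ) - lp.length]'h2)).symm
    else τ with hφfun
  set S₁ : Set (Fin m) := {i : Fin m | (i:ℕ) < lp.length} with hS₁
  set S₂ : Set (Fin m) :=
    {i : Fin m | lp.length ≤ (i:ℕ) ∧ (i:ℕ) < lp.length + lq.length} with hS₂
  have hφ1 : ∀ i : Fin m, ∀ h : (i:ℕ) < lp.length,
      φfun i = Φ p (lp[(i:ℕ)]'h) := by
    intro i h
    simp only [hφfun]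
    rw [dif_pos h]
  have hφ2 : ∀ i : Fin m, ∀ h1 : ¬ ((i:ℕ) < lp.length),
      ∀ h2 : (i:ℕ) - lp.length < lq.length,
      φfun i = (Φ q (lq[(i:ℕ) - lp.length]'h2)).symm := by
    intro i h1 h2
    simp only [hφfun]
    rw [dif_neg h1, dif_pos h2]
  set iτ : Fin m := ⟨lp.length + lq.length, by omega⟩ with hiτ
  have hφ3 : φfun iτ = τ := by
    have h1 : ¬ ((iτ:ℕ) < lp.length) := by
      simp only [hiτ]; omega
    have h2 : ¬ ((iτ:ℕ) - lp.length < lq.length) := by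
      simp only [hiτ]; omega
    simp only [hφfun]
    rw [dif_neg h1, dif_neg h2]
  refine ⟨p, q, hpq, hpx, hqx, ε/500, ε/100, hδpos, by linarith, ?_, ?_, ?_,
    3/4, by norm_num, by norm_num, m, by omega, ?_, φfun, S₁, S₂, ?_, ?_, ?_, ?_, ?_, ?_, ?_⟩
  · apply closedBall_disjoint_closedBall
    rw [hdistpq]
    linarith
  · intro y hy
    rw [mem_closedBall] at hy
    rw [mem_ball]
    have h1 : dist p x = ε/2 := by
      rw [dist_eq_norm, hp, sub_sub_cancel_left, norm_neg, hun]
    have := dist_triangle y p x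
    linarith
  · intro y hy
    rw [mem_closedBall] at hy
    rw [mem_ball]
    have h1 : dist q x = ε/2 := by
      rw [dist_eq_norm, hq, add_sub_cancel_left, hun]
    have := dist_triangle y q x
    linarith
  · have h5 : Tp.card ≤ 5^c := hTpcard
    have h6 : Tq.card ≤ 5^c := hTqcard
    omega
  · -- displacement
    intro i y
    by_cases h1 : (i:ℕ) < lp.length
    · rw [hφ1 i h1]
      set t := lp[(i:ℕ)]'h1 with ht
      have htb : ‖t - p‖ ≤ ε/500 := hTp' t (Finset.mem_toList.mp (List.getElem_mem h1))
      rw [hΦ p t htb y]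
      have hgg : BRT.fmap ε p t y - y = BRT.gmap ε p t y := by rw [BRT.fmap]; abel
      rw [hgg]
      exact BRT.gmap_norm_le hε htb
    · by_cases h2 : (i:ℕ) - lp.length < lq.length
      · rw [hφ2 i h1 h2]
        set t := lq[(i:ℕ) - lp.length]'h2 with ht
        have htb : ‖t - q‖ ≤ ε/500 := hTq' t (Finset.mem_toList.mp (List.getElem_mem h2))
        set z := (Φ q t).symm y with hz
        have hy2 : (Φ q t) z = y := Homeomorph.apply_symm_apply _ _
        rw [hΦ q t htb z] at hy2
        have hgg : z - y = -(BRT.gmap ε q t z) := by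
          rw [← hy2, BRT.fmap]; abel
        rw [show (Φ q t).symm y - y = z - y from rfl, hgg, norm_neg]
        exact BRT.gmap_norm_le hε htb
      · have hieq : φfun i = τ := by
          simp only [hφfun]
          rw [dif_neg h1, dif_neg h2]
        rw [hieq, hτap, add_sub_cancel_right, hqpn]
        linarith
  · -- S₁ contraction + mapsTo
    intro i hi
    have hilt : (i:ℕ) < lp.length := hi
    set t := lp[(i:ℕ)]'hilt with ht
    have htmem : t ∈ Tp := Finset.mem_toList.mp (List.getElem_mem hilt)
    have htb : ‖t - p‖ ≤ ε/500 := hTp' t htmem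
    have happ : ∀ y : EuclideanSpace ℝ (Fin c), ‖y - p‖ ≤ ε/100 →
        φfun i y = t + (3/4:ℝ) • (y - p) := by
      intro y hy
      rw [hφ1 i hilt, hΦ p t htb y, BRT.fmap_eq hε hy]
    constructor
    · intro a ha b hb
      rw [mem_closedBall, dist_eq_norm] at ha hb
      rw [happ a ha, happ b hb, add_sub_add_left_eq_sub, ← smul_sub,
        sub_sub_sub_cancel_right, norm_smul, Real.norm_eq_abs]
      rw [abs_of_pos (by norm_num : (0:ℝ) < 3/4)]
    · intro w hw
      rw [mem_closedBall, dist_eq_norm] at hw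
      rw [mem_ball, dist_eq_norm, happ w hw]
      have heq : t + (3/4:ℝ) • (w - p) - p = (t - p) + (3/4:ℝ) • (w - p) := by abel
      rw [heq]
      calc ‖(t - p) + (3/4:ℝ) • (w - p)‖ ≤ ‖t - p‖ + ‖(3/4:ℝ) • (w - p)‖ := norm_add_le _ _
        _ ≤ ε/500 + (3/4) * (ε/100) := by
            rw [norm_smul, Real.norm_eq_abs, abs_of_pos (by norm_num : (0:ℝ) < 3/4)]
            have : (3/4:ℝ) * ‖w - p‖ ≤ (3/4) * (ε/100) := by nlinarith [norm_nonneg (w - p)]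
            linarith
        _ < ε/100 := by linarith
  · -- covering p
    intro y hy
    obtain ⟨t, htT, htd⟩ := hTpnet y hy
    obtain ⟨n, hn, hnt⟩ := List.mem_iff_getElem.mp
      (show t ∈ lp from Finset.mem_toList.mpr htT)
    set i : Fin m := ⟨n, by omega⟩ with hi
    have hiS : i ∈ S₁ := hn
    have hieq : φfun i = Φ p t := by
      rw [hφ1 i hn]
      exact congrArg (Φ p) hnt
    set z := p + (4/3:ℝ) • (y - t) with hzdef
    have hzp : ‖z - p‖ ≤ ε/750 := by
      rw [hzdef, add_sub_cancel_left, norm_smul, Real.norm_eq_abs,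
        abs_of_pos (by norm_num : (0:ℝ) < 4/3)]
      have : ‖y - t‖ ≤ ε/1000 := by
        rw [← dist_eq_norm]
        calc dist y t ≤ (ε/500)/2 := htd
          _ = ε/1000 := by ring
      nlinarith
    have hzb : z ∈ ball p (ε/500) := by
      rw [mem_ball, dist_eq_norm]
      linarith
    have htzb : ‖t - p‖ ≤ ε/500 := hTp' t htT
    have hφz : φfun i z = y := by
      rw [hieq, hΦ p t htzb z, BRT.fmap_eq hε (by linarith : ‖z - p‖ ≤ ε/100), hzdef,
        add_sub_cancel_left, smul_smul]
      norm_num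
    exact Set.mem_iUnion₂.mpr ⟨i, hiS, z, hzb, hφz⟩
  · -- S₂ contraction + mapsTo
    intro i hi
    obtain ⟨hi1, hi2⟩ := hi
    have h1 : ¬ ((i:ℕ) < lp.length) := by omega
    have h2 : (i:ℕ) - lp.length < lq.length := by omega
    set t := lq[(i:ℕ) - lp.length]'h2 with ht
    have htmem : t ∈ Tq := Finset.mem_toList.mp (List.getElem_mem h2)
    have htb : ‖t - q‖ ≤ ε/500 := hTq' t htmem
    have hsymm : (φfun i).symm = Φ q t := by
      rw [hφ2 i h1 h2, Homeomorph.symm_symm]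
    have happ : ∀ y : EuclideanSpace ℝ (Fin c), ‖y - q‖ ≤ ε/100 →
        (φfun i).symm y = t + (3/4:ℝ) • (y - q) := by
      intro y hy
      rw [hsymm, hΦ q t htb y, BRT.fmap_eq hε hy]
    constructor
    · intro a ha b hb
      rw [mem_closedBall, dist_eq_norm] at ha hb
      rw [happ a ha, happ b hb, add_sub_add_left_eq_sub, ← smul_sub,
        sub_sub_sub_cancel_right, norm_smul, Real.norm_eq_abs]
      rw [abs_of_pos (by norm_num : (0:ℝ) < 3/4)]
    · intro w hw
      rw [mem_closedBall, dist_eq_norm] at hw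
      rw [mem_ball, dist_eq_norm, happ w hw]
      have heq : t + (3/4:ℝ) • (w - q) - q = (t - q) + (3/4:ℝ) • (w - q) := by abel
      rw [heq]
      calc ‖(t - q) + (3/4:ℝ) • (w - q)‖ ≤ ‖t - q‖ + ‖(3/4:ℝ) • (w - q)‖ := norm_add_le _ _
        _ ≤ ε/500 + (3/4) * (ε/100) := by
            rw [norm_smul, Real.norm_eq_abs, abs_of_pos (by norm_num : (0:ℝ) < 3/4)]
            have : (3/4:ℝ) * ‖w - q‖ ≤ (3/4) * (ε/100) := by nlinarith [norm_nonneg (w - q)]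
            linarith
        _ < ε/100 := by linarith
  · -- covering q
    intro y hy
    obtain ⟨t, htT, htd⟩ := hTqnet y hy
    obtain ⟨n, hn, hnt⟩ := List.mem_iff_getElem.mp
      (show t ∈ lq from Finset.mem_toList.mpr htT)
    set i : Fin m := ⟨lp.length + n, by omega⟩ with hi
    have hival : (i:ℕ) = lp.length + n := rfl
    have h1 : ¬ ((i:ℕ) < lp.length) := by omega
    have h2 : (i:ℕ) - lp.length < lq.length := by omega
    have hiS : i ∈ S₂ := ⟨by omega, by omega⟩
    have hidx : lq[(i:ℕ) - lp.length]'h2 = t := by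
      have h3 : (i:ℕ) - lp.length = n := by omega
      have h4 : lq[(i:ℕ) - lp.length]'h2 = lq[n]'hn := by
        simp only [h3]
      rw [h4, hnt]
    have hieq : (φfun i).symm = Φ q t := by
      rw [hφ2 i h1 h2, Homeomorph.symm_symm, hidx]
    set z := q + (4/3:ℝ) • (y - t) with hzdef
    have hzp : ‖z - q‖ ≤ ε/750 := by
      rw [hzdef, add_sub_cancel_left, norm_smul, Real.norm_eq_abs,
        abs_of_pos (by norm_num : (0:ℝ) < 4/3)]
      have : ‖y - t‖ ≤ ε/1000 := by
        rw [← dist_eq_norm]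
        calc dist y t ≤ (ε/500)/2 := htd
          _ = ε/1000 := by ring
      nlinarith
    have hzb : z ∈ ball q (ε/500) := by
      rw [mem_ball, dist_eq_norm]
      linarith
    have htzb : ‖t - q‖ ≤ ε/500 := hTq' t htT
    have hφz : (φfun i).symm z = y := by
      rw [hieq, hΦ q t htzb z, BRT.fmap_eq hε (by linarith : ‖z - q‖ ≤ ε/100), hzdef,
        add_sub_cancel_left, smul_smul]
      norm_num
    exact Set.mem_iUnion₂.mpr ⟨i, hiS, z, hzb, hφz⟩
  · -- transition p → q
    refine ⟨p, mem_ball_self hδpos, [iτ], by simp, ?_⟩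
    rw [wordMap_cons, wordMap_nil, hφ3, hτap, sub_add_cancel]
    exact mem_ball_self hδpos
  · -- transition q → p
    obtain ⟨np, hnp, hnpe⟩ := List.mem_iff_getElem.mp
      (show p ∈ lp from Finset.mem_toList.mpr hpTp)
    set ip : Fin m := ⟨np, by omega⟩ with hip
    have hpp : ‖p - p‖ ≤ ε/500 := by
      rw [sub_self, norm_zero]; positivity
    have happ : ∀ y : EuclideanSpace ℝ (Fin c), φfun ip y = BRT.fmap ε p p y := by
      intro y
      rw [hφ1 ip hnp]
      have h2 : lp[(ip:ℕ)]'hnp = p := hnpe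
      rw [h2]
      exact hΦ p p hpp y
    have hiter : ∀ k : ℕ,
        ‖wordMap (fun i => ⇑(φfun i)) (List.replicate k ip) q - p‖ ≤ (7/8)^k * ε := by
      intro k
      induction k with
      | zero =>
        simp only [List.replicate_zero, wordMap_nil, pow_zero, one_mul]
        rw [hqpn]
      | succ n ih =>
        rw [List.replicate_succ, wordMap_cons]
        set w := wordMap (fun i => ⇑(φfun i)) (List.replicate n ip) q with hw
        have hple : (7/8:ℝ)^n ≤ 1 := pow_le_one₀ (by norm_num) (by norm_num)
        have hwle : ‖w - p‖ ≤ ε := by nlinarith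
        rw [happ w]
        calc ‖BRT.fmap ε p p w - p‖ ≤ (7/8) * ‖w - p‖ := BRT.fmap_shrink hε hwle
          _ ≤ (7/8) * ((7/8)^n * ε) := by nlinarith
          _ = (7/8)^(n+1) * ε := by ring
    obtain ⟨n, hn⟩ := exists_pow_lt_of_lt_one
      (show (0:ℝ) < ε/500/ε by positivity) (by norm_num : (7/8:ℝ) < 1)
    have hfin : (7/8:ℝ)^(n+1) * ε < ε/500 := by
      have h78 : (7/8:ℝ)^(n+1) ≤ (7/8)^n := by
        rw [pow_succ]
        nlinarith [pow_nonneg (by norm_num : (0:ℝ) ≤ 7/8) n]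
      have h2 : (7/8:ℝ)^n * ε < (ε/500/ε) * ε := by nlinarith
      have h3 : (ε/500/ε) * ε = ε/500 := by field_simp
      nlinarith [pow_nonneg (by norm_num : (0:ℝ) ≤ 7/8) (n+1)]
    refine ⟨q, mem_ball_self hδpos, List.replicate (n+1) ip, by simp, ?_⟩
    rw [mem_ball, dist_eq_norm]
    exact lt_of_le_of_lt (hiter (n+1)) hfin
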